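/- Moment inequality: For every real p ≥ 1 there exists a constant C(p) < ∞ such that for every nonnegative random variable X on a probability space with E[X^{2p}] < ∞, one has E[ |X − E[X]|^{2p} ] ≤ C · E[ (X^p − E[X^p])² ]. -/

import Mathlib

open MeasureTheory

lemma mi_rpow_sub_le {a b q : ℝ} (hb : 0 ≤ b) (hba : b ≤ a) (hq : 1 ≤ q) :
    (a - b) ^ q ≤ a ^ q - b ^ q := by
  have hu : (0:ℝ) ≤ a - b := by linarith
  have key : (a - b) ^ q + b ^ q ≤ ((a - b) + b) ^ q := by
    lift a - b to NNReal using hu with u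
    lift b to NNReal using hb with b'
    exact_mod_cast NNReal.add_rpow_le_rpow_add u b' hq
  rw [sub_add_cancel] at key
  linarith

lemma mi_two_rpow {x y q : ℝ} (hx : 0 ≤ x) (hy : 0 ≤ y) (hq : 1 ≤ q) :
    (x + y) ^ q ≤ 2 ^ (q - 1) * (x ^ q + y ^ q) := by
  lift x to NNReal using hx
  lift y to NNReal using hy
  exact_mod_cast NNReal.rpow_add_le_mul_rpow_add_rpow x y hq

lemma mi_abs_rpow_le {a b p : ℝ} (ha : 0 ≤ a) (hb : 0 ≤ b) (hp : 1 ≤ p) :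
    |a - b| ^ p ≤ |a ^ p - b ^ p| := by
  have hp0 : (0:ℝ) ≤ p := by linarith
  rcases le_total b a with h | h
  · rw [abs_of_nonneg (by linarith : (0:ℝ) ≤ a - b),
      abs_of_nonneg (by linarith [Real.rpow_le_rpow hb h hp0] : (0:ℝ) ≤ a ^ p - b ^ p)]
    exact mi_rpow_sub_le hb h hp
  · rw [abs_sub_comm, abs_sub_comm (a ^ p),
      abs_of_nonneg (by linarith : (0:ℝ) ≤ b - a),
      abs_of_nonneg (by linarith [Real.rpow_le_rpow ha h hp0] : (0:ℝ) ≤ b ^ p - a ^ p)]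
    exact mi_rpow_sub_le ha h hp

lemma mi_abs_key {a b p : ℝ} (ha : 0 ≤ a) (hb : 0 ≤ b) (hp : 1 ≤ p) :
    |a - b| ^ (2 * p) ≤ (a ^ p - b ^ p) ^ 2 := by
  have h1 : |a - b| ^ (2 * p) = (|a - b| ^ p) ^ 2 := by
    rw [mul_comm, Real.rpow_mul (abs_nonneg _), Real.rpow_two]
  rw [h1]
  calc (|a - b| ^ p) ^ 2 ≤ |a ^ p - b ^ p| ^ 2 :=
        pow_le_pow_left₀ (Real.rpow_nonneg (abs_nonneg _) p) (mi_abs_rpow_le ha hb hp) 2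
    _ = (a ^ p - b ^ p) ^ 2 := sq_abs _

/-- **Moment inequality.**
For every real `p ≥ 1` there exists a constant `C(p) < ∞` such that for every nonnegative
random variable `X` on a probability space with `E[X^{2p}] < ∞`, one has
`E[|X − E[X]|^{2p}] ≤ C E[(X^p − E[X^p])²]`. -/
theorem moment_inequality (p : ℝ) (hp : 1 ≤ p) :
    ∃ C : ℝ, ∀ (Ω : Type) (_ : MeasurableSpace Ω) (μ : Measure Ω),
      IsProbabilityMeasure μ → ∀ X : Ω → ℝ, Measurable X → (∀ ω, 0 ≤ X ω) →
      Integrable (fun ω => X ω ^ (2 * p)) μ →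
      ∫ ω, |X ω - ∫ ω', X ω' ∂μ| ^ (2 * p) ∂μ ≤
        C * ∫ ω, (X ω ^ p - ∫ ω', X ω' ^ p ∂μ) ^ 2 ∂μ := by
  refine ⟨2 ^ (2 * p), fun Ω _ μ hprob X hXm hX0 hX2p => ?_⟩
  have hp0 : (0:ℝ) < p := by linarith
  have hq : (1:ℝ) ≤ 2 * p := by linarith
  have hq0 : (0:ℝ) ≤ 2 * p := by linarith
  -- measurability and integrability facts
  have hXp_m : Measurable fun ω => X ω ^ p := hXm.pow measurable_const
  have hXp_int : Integrable (fun ω => X ω ^ p) μ := by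
    refine Integrable.mono' ((integrable_const 1).add hX2p) hXp_m.aestronglyMeasurable ?_
    filter_upwards with ω
    simp only [Pi.add_apply]
    rw [Real.norm_eq_abs, abs_of_nonneg (Real.rpow_nonneg (hX0 ω) p)]
    rcases le_total (X ω) 1 with h | h
    · have h1 : X ω ^ p ≤ 1 := Real.rpow_le_one (hX0 ω) h hp0.le
      have h2 : (0:ℝ) ≤ X ω ^ (2 * p) := Real.rpow_nonneg (hX0 ω) _
      linarith
    · have h1 : X ω ^ p ≤ X ω ^ (2 * p) :=
        Real.rpow_le_rpow_of_exponent_le h (by linarith)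
      linarith
  have hX_int : Integrable X μ := by
    refine Integrable.mono' ((integrable_const 1).add hX2p) hXm.aestronglyMeasurable ?_
    filter_upwards with ω
    simp only [Pi.add_apply]
    rw [Real.norm_eq_abs, abs_of_nonneg (hX0 ω)]
    rcases le_total (X ω) 1 with h | h
    · have h2 : (0:ℝ) ≤ X ω ^ (2 * p) := Real.rpow_nonneg (hX0 ω) _
      linarith
    · have h1 : X ω ^ (1:ℝ) ≤ X ω ^ (2 * p) :=
        Real.rpow_le_rpow_of_exponent_le h (by linarith)
      rw [Real.rpow_one] at h1
      linarith
  set m := ∫ ω', X ω' ^ p ∂μ with hm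
  have hm0 : 0 ≤ m := integral_nonneg fun ω => Real.rpow_nonneg (hX0 ω) p
  set c : ℝ := m ^ p⁻¹ with hc
  have hc0 : 0 ≤ c := Real.rpow_nonneg hm0 _
  have hcp : c ^ p = m := by
    rw [hc, ← Real.rpow_mul hm0, inv_mul_cancel₀ (ne_of_gt hp0), Real.rpow_one]
  -- key pointwise bound
  have hA : ∀ ω, |X ω - c| ^ (2 * p) ≤ (X ω ^ p - m) ^ 2 := fun ω => by
    have := mi_abs_key (hX0 ω) hc0 hp
    rwa [hcp] at this
  have hsq_int : Integrable (fun ω => (X ω ^ p - m) ^ 2) μ := by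
    have heq : (fun ω => (X ω ^ p - m) ^ 2)
        = fun ω => X ω ^ (2 * p) - (2 * m) * X ω ^ p + m ^ 2 := by
      funext ω
      have h2 : X ω ^ (2 * p) = (X ω ^ p) ^ 2 := by
        rw [mul_comm, Real.rpow_mul (hX0 ω), Real.rpow_two]
      rw [h2]; ring
    rw [heq]
    exact (hX2p.sub (hXp_int.const_mul (2 * m))).add (integrable_const _)
  have hY_m : Measurable fun ω => |X ω - c| ^ (2 * p) :=
    ((hXm.sub measurable_const).abs).pow measurable_const
  have hYq_int : Integrable (fun ω => |X ω - c| ^ (2 * p)) μ := by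
    refine hsq_int.mono' hY_m.aestronglyMeasurable ?_
    filter_upwards with ω
    rw [Real.norm_eq_abs, abs_of_nonneg (Real.rpow_nonneg (abs_nonneg _) _)]
    exact hA ω
  have hY_int : Integrable (fun ω => |X ω - c|) μ := (hX_int.sub (integrable_const c)).abs
  -- Jensen's inequality
  have hjen : (∫ ω, |X ω - c| ∂μ) ^ (2 * p) ≤ ∫ ω, |X ω - c| ^ (2 * p) ∂μ := by
    have hgc : ContinuousOn (fun x : ℝ => x ^ (2 * p)) (Set.Ici 0) := fun x _ =>
      (Real.continuousAt_rpow_const x (2 * p) (Or.inr hq0)).continuousWithinAt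
    have := (convexOn_rpow hq).map_integral_le (μ := μ) (f := fun ω => |X ω - c|)
      hgc isClosed_Ici (Filter.Eventually.of_forall fun ω => Set.mem_Ici.mpr (abs_nonneg _)) hY_int
      (by exact hYq_int)
    simpa using this
  set d := ∫ ω, |X ω - c| ∂μ with hd
  have hd0 : 0 ≤ d := integral_nonneg fun ω => abs_nonneg _
  set EX := ∫ ω', X ω' ∂μ with hEX
  have hEc : |c - EX| ≤ d := by
    have h1 : EX - c = ∫ ω, (X ω - c) ∂μ := by
      rw [integral_sub hX_int (integrable_const c), integral_const]
      simp [hEX]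
    have h2 : |∫ ω, (X ω - c) ∂μ| ≤ ∫ ω, |X ω - c| ∂μ := by
      simpa [Real.norm_eq_abs] using
        norm_integral_le_integral_norm (μ := μ) (f := fun ω => X ω - c)
    rw [abs_sub_comm, h1]
    exact h2
  -- pointwise bound for the LHS integrand
  have hpt : ∀ ω, |X ω - EX| ^ (2 * p)
      ≤ 2 ^ (2 * p - 1) * (|X ω - c| ^ (2 * p) + d ^ (2 * p)) := by
    intro ω
    have t1 : |X ω - EX| ≤ |X ω - c| + d :=
      le_trans (abs_sub_le (X ω) c EX) (by linarith [hEc])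
    have t2 : |X ω - EX| ^ (2 * p) ≤ (|X ω - c| + d) ^ (2 * p) :=
      Real.rpow_le_rpow (abs_nonneg _) t1 hq0
    exact t2.trans (mi_two_rpow (abs_nonneg _) hd0 hq)
  have hS0 : 0 ≤ ∫ ω, (X ω ^ p - m) ^ 2 ∂μ := integral_nonneg fun ω => sq_nonneg _
  have hC0 : (0:ℝ) ≤ 2 ^ (2 * p - 1) := Real.rpow_nonneg (by norm_num) _
  calc ∫ ω, |X ω - EX| ^ (2 * p) ∂μ
      ≤ ∫ ω, 2 ^ (2 * p - 1) * (|X ω - c| ^ (2 * p) + d ^ (2 * p)) ∂μ := by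
        refine integral_mono_of_nonneg
          (Filter.Eventually.of_forall fun ω => Real.rpow_nonneg (abs_nonneg _) _)
          ((hYq_int.add (integrable_const _)).const_mul _)
          (Filter.Eventually.of_forall hpt)
    _ = 2 ^ (2 * p - 1) * ((∫ ω, |X ω - c| ^ (2 * p) ∂μ) + d ^ (2 * p)) := by
        rw [integral_const_mul, integral_add hYq_int (integrable_const _), integral_const]
        simp
    _ ≤ 2 ^ (2 * p - 1) * ((∫ ω, |X ω - c| ^ (2 * p) ∂μ) + (∫ ω, |X ω - c| ^ (2 * p) ∂μ)) := by
        exact mul_le_mul_of_nonneg_left (by linarith [hjen]) hC0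
    _ = (2 ^ (2 * p - 1) * 2 ^ (1:ℝ)) * (∫ ω, |X ω - c| ^ (2 * p) ∂μ) := by
        rw [Real.rpow_one]; ring
    _ = 2 ^ (2 * p) * (∫ ω, |X ω - c| ^ (2 * p) ∂μ) := by
        rw [← Real.rpow_add (by norm_num : (0:ℝ) < 2)]
        norm_num
    _ ≤ 2 ^ (2 * p) * ∫ ω, (X ω ^ p - m) ^ 2 ∂μ := by
        refine mul_le_mul_of_nonneg_left ?_ (Real.rpow_nonneg (by norm_num) _)
        exact integral_mono_of_nonneg
          (Filter.Eventually.of_forall fun ω => Real.rpow_nonneg (abs_nonneg _) _)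
          hsq_int (Filter.Eventually.of_forall hA)
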